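/- arXiv:2402.12316 — 6 statements merged into one kernel-verified Lean document; each statement's English description precedes it below -/
import Mathlib

section
/- If K is a nonempty compact subspace of a topological space H, then for every topological space X the map 1 × p : X × H → X × (H/K), where p : H → H/K is the quotient map collapsing K to a point, is a quotient map. -/
open Topology

section SmashDefs

variable {X Y : Type*} [TopologicalSpace X] [TopologicalSpace Y]

/-- The relation on `X × Y` collapsing the wedge `X × {y₀} ∪ {x₀} × Y` to a point. -/
def smashRel (x₀ : X) (y₀ : Y) : X × Y → X × Y → Prop :=
  fun p q => p = q ∨ ((p.1 = x₀ ∨ p.2 = y₀) ∧ (q.1 = x₀ ∨ q.2 = y₀))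

/-- The smash product `X ∧ Y` of pointed spaces, as the quotient `(X × Y)/(X ∨ Y)`
collapsing the wedge to a point, with the quotient topology. -/
def Smash (x₀ : X) (y₀ : Y) : Type _ := Quot (smashRel x₀ y₀)

instance (x₀ : X) (y₀ : Y) : TopologicalSpace (Smash x₀ y₀) :=
  inferInstanceAs (TopologicalSpace (Quot _))

/-- Canonical projection `η : X × Y → X ∧ Y`. -/
def Smash.mk (x₀ : X) (y₀ : Y) (p : X × Y) : Smash x₀ y₀ := Quot.mk _ p

/-- Basepoint of the smash product. -/
def Smash.pt (x₀ : X) (y₀ : Y) : Smash x₀ y₀ := Smash.mk x₀ y₀ (x₀, y₀)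

end SmashDefs

section CollapseDefs

variable {A : Type*} [TopologicalSpace A]

/-- The relation collapsing a subset `S` of `A` to a single point. -/
def collapseRel (S : Set A) : A → A → Prop := fun a b => a = b ∨ (a ∈ S ∧ b ∈ S)

/-- The topological quotient `A/S` identifying all points of `S`. -/
def Collapse (S : Set A) : Type _ := Quot (collapseRel S)

instance (S : Set A) : TopologicalSpace (Collapse S) :=
  inferInstanceAs (TopologicalSpace (Quot _))

/-- The canonical projection `A → A/S`. -/
def Collapse.mk (S : Set A) (a : A) : Collapse S := Quot.mk _ a

end CollapseDefs

-- auxiliary lemmas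
lemma collapseRel_equiv {A : Type*} (S : Set A) : Equivalence (collapseRel S) where
  refl a := Or.inl rfl
  symm {a b} h := by rcases h with rfl | ⟨ha, hb⟩; exacts [Or.inl rfl, Or.inr ⟨hb, ha⟩]
  trans {a b c} h1 h2 := by
    rcases h1 with rfl | ⟨ha, hb⟩
    · exact h2
    · rcases h2 with rfl | ⟨hb', hc⟩
      · exact Or.inr ⟨ha, hb⟩
      · exact Or.inr ⟨ha, hc⟩

lemma collapse_mk_eq_iff {A : Type*} (S : Set A) {a b : A} :
    Collapse.mk S a = Collapse.mk S b ↔ collapseRel S a b := by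
  constructor
  · intro h
    exact ((collapseRel_equiv S).eqvGen_iff).mp (Quot.eqvGen_exact h)
  · exact fun h => Quot.sound h

lemma isQuotientMap_collapse_mk {A : Type*} [TopologicalSpace A] (S : Set A) :
    IsQuotientMap (Collapse.mk S) := isQuotientMap_quot_mk

lemma collapse_image_open {A : Type*} [TopologicalSpace A] {K B : Set A} (hB : IsOpen B)
    (hsat : K ⊆ B ∨ ∀ k ∈ K, k ∉ B) : IsOpen (Collapse.mk K '' B) := by
  rw [← (isQuotientMap_collapse_mk K).isOpen_preimage]
  have : Collapse.mk K ⁻¹' (Collapse.mk K '' B) = B := by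
    ext a
    simp only [Set.mem_preimage, Set.mem_image]
    constructor
    · rintro ⟨b, hb, hba⟩
      rcases (collapse_mk_eq_iff K).mp hba with rfl | ⟨hbK, haK⟩
      · exact hb
      · rcases hsat with h | h
        · exact h haK
        · exact absurd hb (h b hbK)
    · exact fun ha => ⟨a, ha, rfl⟩
  rw [this]; exact hB

/-- If `K` is a nonempty compact subspace of `H`, then for every space `X` the map
`1 × p : X × H → X × (H/K)` is a quotient map. -/
theorem isQuotientMap_prod_collapse_of_isCompact {X H : Type} [TopologicalSpace X]
    [TopologicalSpace H] (K : Set H) (hK : IsCompact K) (hne : K.Nonempty) :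
    IsQuotientMap (fun p : X × H => (p.1, Collapse.mk K p.2)) := by
  simp_rw [isQuotientMap_iff, isCoinducing_iff, and_comm, iff_comm]
  refine ⟨fun ⟨x, z⟩ => ?_, fun W => ⟨fun hW => ?_, fun hV => ?_⟩⟩
  · obtain ⟨h, rfl⟩ := Quot.exists_rep z
    exact ⟨(x, h), rfl⟩
  · exact hW.preimage (continuous_fst.prodMk
      ((isQuotientMap_collapse_mk K).continuous.comp continuous_snd))
  · set f : X × H → X × Collapse K := fun p => (p.1, Collapse.mk K p.2) with hf
    set V : Set (X × H) := f ⁻¹' W with hVdef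
    -- saturation of V
    have hsatV : ∀ x : X, ∀ k ∈ K, (x, k) ∈ V → ∀ k' ∈ K, (x, k') ∈ V := by
      intro x k hk hxk k' hk'
      have : Collapse.mk K k' = Collapse.mk K k := Quot.sound (Or.inr ⟨hk', hk⟩)
      show (x, Collapse.mk K k') ∈ W
      rw [this]; exact hxk
    rw [isOpen_iff_mem_nhds]
    rintro ⟨x, z⟩ hz
    obtain ⟨h, rfl⟩ : ∃ h, Collapse.mk K h = z := Quot.exists_rep z
    have hxh : (x, h) ∈ V := hz
    obtain ⟨U, O, hU, hO, hxU, hhO, hUO⟩ := isOpen_prod_iff.mp hV x h hxh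
    by_cases hOK : ∀ k ∈ K, k ∉ O
    · -- O disjoint from K
      rw [mem_nhds_prod_iff']
      exact ⟨U, Collapse.mk K '' O, hU, hxU, collapse_image_open hO (Or.inr hOK),
        ⟨h, hhO, rfl⟩, by
          rintro ⟨x', z'⟩ ⟨hx', b, hbO, rfl⟩
          exact hUO (Set.mk_mem_prod hx' hbO)⟩
    · -- O meets K: get tube around {x} × K, enlarge
      push_neg at hOK
      obtain ⟨k, hkK, hkO⟩ := hOK
      have hxK : ∀ k' ∈ K, (x, k') ∈ V :=
        hsatV x k hkK (hUO ⟨hxU, hkO⟩)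
      have hsub : Set.singleton x ×ˢ K ⊆ V := by
        rintro ⟨x', k'⟩ ⟨rfl, hk'⟩
        exact hxK k' hk'
      obtain ⟨U', O', hU', hO', hxU', hKO', hU'O'⟩ :=
        generalized_tube_lemma isCompact_singleton hK hV hsub
      refine mem_nhds_prod_iff'.mpr ⟨U ∩ U', Collapse.mk K '' (O ∪ O'), hU.inter hU',
        ⟨hxU, hxU' rfl⟩,
        collapse_image_open (hO.union hO') (Or.inl fun a ha => Or.inr (hKO' ha)),
        ⟨h, Or.inl hhO, rfl⟩, ?_⟩
      rintro ⟨x', z'⟩ ⟨⟨hx'U, hx'U'⟩, b, hb, rfl⟩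
      rcases hb with hb | hb
      · exact hUO (Set.mk_mem_prod hx'U hb)
      · exact hU'O' (Set.mk_mem_prod hx'U' hb)
end

section
/- Let X, Y, Z be pointed topological spaces such that the underlying spaces of X and Z are exponentiable in Top (i.e., the functor − × X and − × Z preserve quotient maps, e.g. X and Z locally compact). Then the canonical set-theoretic associator κ : X ∧ (Y ∧ Z) → (X ∧ Y) ∧ Z, κ(x ∧ (y ∧ z)) = (x ∧ y) ∧ z, is a pointed homeomorphism. -/
open Topology

/-- A topological space `A` is exponentiable (for the cartesian product) iff the
functor `− × A` preserves quotient maps. -/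
def IsExponentiable (A : Type) [TopologicalSpace A] : Prop :=
  ∀ (B C : Type) (_ : TopologicalSpace B) (_ : TopologicalSpace C) (f : B → C),
    IsQuotientMap f → IsQuotientMap (fun p : B × A => (f p.1, p.2))

set_option linter.unusedSectionVars false

section AuxSA

variable {X Y Z : Type} [TopologicalSpace X] [TopologicalSpace Y] [TopologicalSpace Z]
variable (x₀ : X) (y₀ : Y) (z₀ : Z)

/-- collapse to basepoint helpers -/
lemma smash_mk_pt {p : X × Y} (h : p.1 = x₀ ∨ p.2 = y₀) :
    Smash.mk x₀ y₀ p = Smash.pt x₀ y₀ :=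
  Quot.sound (Or.inr ⟨h, Or.inl rfl⟩)

lemma fwd_collapses (x : X) {q : Y × Z} (h : q.1 = y₀ ∨ q.2 = z₀) :
    Smash.mk (Smash.pt x₀ y₀) z₀ (Smash.mk x₀ y₀ (x, q.1), q.2)
      = Smash.pt (Smash.pt x₀ y₀) z₀ := by
  rcases h with h | h
  · rw [smash_mk_pt x₀ y₀ (Or.inr h)]
    exact smash_mk_pt _ _ (Or.inl rfl)
  · exact smash_mk_pt _ _ (Or.inr h)

/-- `F : X × (Y ∧ Z) → (X ∧ Y) ∧ Z` -/
def fwdAux : X × Smash y₀ z₀ → Smash (Smash.pt x₀ y₀) z₀ :=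
  fun p =>
    Quot.lift (fun q : Y × Z => Smash.mk (Smash.pt x₀ y₀) z₀ (Smash.mk x₀ y₀ (p.1, q.1), q.2))
      (by
        rintro a b (rfl | ⟨ha, hb⟩)
        · rfl
        · rw [fwd_collapses x₀ y₀ z₀ _ ha, fwd_collapses x₀ y₀ z₀ _ hb]) p.2

lemma fwdAux_collapses (p : X × Smash y₀ z₀)
    (h : p.1 = x₀ ∨ p.2 = Smash.pt y₀ z₀) :
    fwdAux x₀ y₀ z₀ p = Smash.pt (Smash.pt x₀ y₀) z₀ := by
  obtain ⟨x, w⟩ := p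
  rcases h with h | h
  · induction w using Quot.ind with
    | _ q =>
      show Smash.mk (Smash.pt x₀ y₀) z₀ (Smash.mk x₀ y₀ (x, q.1), q.2) = _
      rw [smash_mk_pt x₀ y₀ (Or.inl h)]
      exact smash_mk_pt _ _ (Or.inl rfl)
  · dsimp at h; subst h
    exact fwd_collapses x₀ y₀ z₀ x (Or.inl rfl)

lemma bwd_collapses (z : Z) {q : X × Y} (h : q.1 = x₀ ∨ q.2 = y₀) :
    Smash.mk x₀ (Smash.pt y₀ z₀) (q.1, Smash.mk y₀ z₀ (q.2, z))
      = Smash.pt x₀ (Smash.pt y₀ z₀) := by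
  rcases h with h | h
  · exact smash_mk_pt _ _ (Or.inl h)
  · rw [smash_mk_pt y₀ z₀ (Or.inl h)]
    exact smash_mk_pt _ _ (Or.inr rfl)

/-- `G : (X ∧ Y) × Z → X ∧ (Y ∧ Z)` -/
def bwdAux : Smash x₀ y₀ × Z → Smash x₀ (Smash.pt y₀ z₀) :=
  fun p =>
    Quot.lift (fun q : X × Y => Smash.mk x₀ (Smash.pt y₀ z₀) (q.1, Smash.mk y₀ z₀ (q.2, p.2)))
      (by
        rintro a b (rfl | ⟨ha, hb⟩)
        · rfl
        · rw [bwd_collapses x₀ y₀ z₀ _ ha, bwd_collapses x₀ y₀ z₀ _ hb]) p.1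

lemma bwdAux_collapses (p : Smash x₀ y₀ × Z)
    (h : p.1 = Smash.pt x₀ y₀ ∨ p.2 = z₀) :
    bwdAux x₀ y₀ z₀ p = Smash.pt x₀ (Smash.pt y₀ z₀) := by
  obtain ⟨w, z⟩ := p
  rcases h with h | h
  · dsimp at h; subst h
    exact bwd_collapses x₀ y₀ z₀ z (Or.inl rfl)
  · induction w using Quot.ind with
    | _ q =>
      show Smash.mk x₀ (Smash.pt y₀ z₀) (q.1, Smash.mk y₀ z₀ (q.2, z)) = _
      rw [smash_mk_pt y₀ z₀ (Or.inr h)]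
      exact smash_mk_pt _ _ (Or.inr rfl)

lemma fwdAux_continuous (hX : IsExponentiable X) : Continuous (fwdAux x₀ y₀ z₀) := by
  have hq : IsQuotientMap (fun p : (Y × Z) × X => (Quot.mk (smashRel y₀ z₀) p.1, p.2)) :=
    hX _ _ _ _ _ isQuotientMap_quot_mk
  have hq' : IsQuotientMap (fun p : X × (Y × Z) => (p.1, Smash.mk y₀ z₀ p.2)) := by
    have := ((Homeomorph.prodComm (Smash y₀ z₀) X).isQuotientMap.comp hq).comp
      (Homeomorph.prodComm X (Y × Z)).isQuotientMap
    exact this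
  rw [hq'.continuous_iff]
  show Continuous fun p : X × (Y × Z) =>
    Smash.mk (Smash.pt x₀ y₀) z₀ (Smash.mk x₀ y₀ (p.1, p.2.1), p.2.2)
  exact continuous_quot_mk.comp
    ((continuous_quot_mk.comp (continuous_fst.prodMk (continuous_fst.comp continuous_snd))).prodMk
      (continuous_snd.comp continuous_snd))

lemma bwdAux_continuous (hZ : IsExponentiable Z) : Continuous (bwdAux x₀ y₀ z₀) := by
  have hq : IsQuotientMap (fun p : (X × Y) × Z => (Quot.mk (smashRel x₀ y₀) p.1, p.2)) :=
    hZ _ _ _ _ _ isQuotientMap_quot_mk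
  apply hq.continuous_iff.mpr
  show Continuous fun p : (X × Y) × Z =>
    Smash.mk x₀ (Smash.pt y₀ z₀) (p.1.1, Smash.mk y₀ z₀ (p.1.2, p.2))
  exact continuous_quot_mk.comp
    ((continuous_fst.comp continuous_fst).prodMk
      (continuous_quot_mk.comp ((continuous_snd.comp continuous_fst).prodMk continuous_snd)))

def fwd : Smash x₀ (Smash.pt y₀ z₀) → Smash (Smash.pt x₀ y₀) z₀ :=
  Quot.lift (fwdAux x₀ y₀ z₀) (by
    rintro a b (rfl | ⟨ha, hb⟩)
    · rfl
    · rw [fwdAux_collapses x₀ y₀ z₀ _ ha, fwdAux_collapses x₀ y₀ z₀ _ hb])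

def bwd : Smash (Smash.pt x₀ y₀) z₀ → Smash x₀ (Smash.pt y₀ z₀) :=
  Quot.lift (bwdAux x₀ y₀ z₀) (by
    rintro a b (rfl | ⟨ha, hb⟩)
    · rfl
    · rw [bwdAux_collapses x₀ y₀ z₀ _ ha, bwdAux_collapses x₀ y₀ z₀ _ hb])

lemma bwd_fwd : ∀ a, bwd x₀ y₀ z₀ (fwd x₀ y₀ z₀ a) = a := by
  rintro ⟨x, w⟩
  induction w using Quot.ind with
  | _ q => obtain ⟨y, z⟩ := q; rfl

lemma fwd_bwd : ∀ a, fwd x₀ y₀ z₀ (bwd x₀ y₀ z₀ a) = a := by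
  rintro ⟨w, z⟩
  induction w using Quot.ind with
  | _ q => obtain ⟨x, y⟩ := q; rfl

end AuxSA

/-- If `X` and `Z` are exponentiable, the triple `(X, Y, Z)` is (regularly) associative:
the canonical associator `κ : X ∧ (Y ∧ Z) → (X ∧ Y) ∧ Z` is a pointed homeomorphism. -/
theorem smash_assoc_of_exponentiable {X Y Z : Type} [TopologicalSpace X] [TopologicalSpace Y]
    [TopologicalSpace Z] (x₀ : X) (y₀ : Y) (z₀ : Z)
    (hX : IsExponentiable X) (hZ : IsExponentiable Z) :
    ∃ h : Smash x₀ (Smash.pt y₀ z₀) ≃ₜ Smash (Smash.pt x₀ y₀) z₀,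
      h (Smash.pt x₀ (Smash.pt y₀ z₀)) = Smash.pt (Smash.pt x₀ y₀) z₀ ∧
      ∀ (x : X) (y : Y) (z : Z),
        h (Smash.mk _ _ (x, Smash.mk y₀ z₀ (y, z))) =
          Smash.mk _ _ (Smash.mk x₀ y₀ (x, y), z) := by
  refine ⟨⟨⟨fwd x₀ y₀ z₀, bwd x₀ y₀ z₀, bwd_fwd x₀ y₀ z₀, fwd_bwd x₀ y₀ z₀⟩,
    continuous_quot_lift _ (fwdAux_continuous x₀ y₀ z₀ hX),
    continuous_quot_lift _ (bwdAux_continuous x₀ y₀ z₀ hZ)⟩, rfl, fun x y z => rfl⟩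
end

section
/- Let X, Y, Z be pointed topological spaces with Y compact and Z compact and exponentiable (e.g., Y and Z compact Hausdorff, or more specially locally compact compact). Then the associator κ : X ∧ (Y ∧ Z) → (X ∧ Y) ∧ Z is a pointed homeomorphism; in particular the smash product of compact Hausdorff pointed spaces is associative. -/
open Topology

section Aux

variable {X Y Z : Type} [TopologicalSpace X] [TopologicalSpace Y] [TopologicalSpace Z]
variable (x₀ : X) (y₀ : Y) (z₀ : Z)

theorem smashRel_equivalence : Equivalence (smashRel x₀ y₀) where
  refl p := Or.inl rfl
  symm h := by
    rcases h with h | ⟨h1, h2⟩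
    · exact Or.inl h.symm
    · exact Or.inr ⟨h2, h1⟩
  trans h h' := by
    rcases h with h | ⟨h1, h2⟩
    · exact h ▸ h'
    · rcases h' with h' | ⟨h1', h2'⟩
      · exact Or.inr ⟨h1, h' ▸ h2⟩
      · exact Or.inr ⟨h1, h2'⟩

theorem smashRel_of_mk_eq {p q : X × Y}
    (h : Smash.mk x₀ y₀ p = Smash.mk x₀ y₀ q) : smashRel x₀ y₀ p q :=
  ((smashRel_equivalence x₀ y₀).eqvGen_iff).mp (Quot.eq.mp h)

/-- Values over the wedge of `Y × Z` are sent to the basepoint. -/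
theorem assoc_wedge_val (x : X) (yz : Y × Z) (h : yz.1 = y₀ ∨ yz.2 = z₀) :
    Smash.mk (Smash.pt x₀ y₀) z₀ (Smash.mk x₀ y₀ (x, yz.1), yz.2)
      = Smash.pt (Smash.pt x₀ y₀) z₀ := by
  rcases h with h | h
  · have h1 : Smash.mk x₀ y₀ (x, yz.1) = Smash.pt x₀ y₀ :=
      Quot.sound (Or.inr ⟨Or.inr h, Or.inr rfl⟩)
    rw [Smash.mk, h1]
    exact Quot.sound (Or.inr ⟨Or.inl rfl, Or.inl rfl⟩)
  · exact Quot.sound (Or.inr ⟨Or.inr h, Or.inr rfl⟩)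

/-- The map `X × (Y ∧ Z) → (X ∧ Y) ∧ Z`. -/
def assocAux : X × Smash y₀ z₀ → Smash (Smash.pt x₀ y₀) z₀ :=
  fun p =>
    Quot.lift (fun yz => Smash.mk (Smash.pt x₀ y₀) z₀ (Smash.mk x₀ y₀ (p.1, yz.1), yz.2))
      (by
        rintro a b (rfl | ⟨ha, hb⟩)
        · rfl
        · exact (assoc_wedge_val x₀ y₀ z₀ p.1 a ha).trans
            (assoc_wedge_val x₀ y₀ z₀ p.1 b hb).symm) p.2

theorem assocAux_mk (x : X) (yz : Y × Z) :
    assocAux x₀ y₀ z₀ (x, Smash.mk y₀ z₀ yz)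
      = Smash.mk (Smash.pt x₀ y₀) z₀ (Smash.mk x₀ y₀ (x, yz.1), yz.2) := rfl

theorem assocAux_pt (p : X × Smash y₀ z₀) (h : p.1 = x₀ ∨ p.2 = Smash.pt y₀ z₀) :
    assocAux x₀ y₀ z₀ p = Smash.pt (Smash.pt x₀ y₀) z₀ := by
  obtain ⟨x, w⟩ := p
  obtain ⟨yz, rfl⟩ := Quot.exists_rep w
  rcases h with h | h
  · dsimp at h
    show Smash.mk (Smash.pt x₀ y₀) z₀ (Smash.mk x₀ y₀ (x, yz.1), yz.2) = _
    have h1 : Smash.mk x₀ y₀ (x, yz.1) = Smash.pt x₀ y₀ :=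
      Quot.sound (Or.inr ⟨Or.inl h, Or.inr rfl⟩)
    rw [Smash.mk, h1]
    exact Quot.sound (Or.inr ⟨Or.inl rfl, Or.inl rfl⟩)
  · dsimp at h
    have h2 := smashRel_of_mk_eq y₀ z₀ h
    rcases h2 with h2 | ⟨h2, _⟩
    · exact assoc_wedge_val x₀ y₀ z₀ x yz (by rw [h2]; exact Or.inl rfl)
    · exact assoc_wedge_val x₀ y₀ z₀ x yz h2

/-- The associator `X ∧ (Y ∧ Z) → (X ∧ Y) ∧ Z`. -/
def assocFun : Smash x₀ (Smash.pt y₀ z₀) → Smash (Smash.pt x₀ y₀) z₀ :=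
  Quot.lift (assocAux x₀ y₀ z₀)
    (by
      rintro a b (rfl | ⟨ha, hb⟩)
      · rfl
      · exact (assocAux_pt x₀ y₀ z₀ a ha).trans (assocAux_pt x₀ y₀ z₀ b hb).symm)

/-- Values over the wedge of `X × Y` are sent to the basepoint (inverse direction). -/
theorem assocInv_wedge_val (z : Z) (xy : X × Y) (h : xy.1 = x₀ ∨ xy.2 = y₀) :
    Smash.mk x₀ (Smash.pt y₀ z₀) (xy.1, Smash.mk y₀ z₀ (xy.2, z))
      = Smash.pt x₀ (Smash.pt y₀ z₀) := by
  rcases h with h | h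
  · exact Quot.sound (Or.inr ⟨Or.inl h, Or.inl rfl⟩)
  · have h1 : Smash.mk y₀ z₀ (xy.2, z) = Smash.pt y₀ z₀ :=
      Quot.sound (Or.inr ⟨Or.inl h, Or.inl rfl⟩)
    rw [Smash.mk, h1]
    exact Quot.sound (Or.inr ⟨Or.inr rfl, Or.inr rfl⟩)

/-- The map `(X ∧ Y) × Z → X ∧ (Y ∧ Z)`. -/
def assocInvAux : Smash x₀ y₀ × Z → Smash x₀ (Smash.pt y₀ z₀) :=
  fun p =>
    Quot.lift (fun xy => Smash.mk x₀ (Smash.pt y₀ z₀) (xy.1, Smash.mk y₀ z₀ (xy.2, p.2)))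
      (by
        rintro a b (rfl | ⟨ha, hb⟩)
        · rfl
        · exact (assocInv_wedge_val x₀ y₀ z₀ p.2 a ha).trans
            (assocInv_wedge_val x₀ y₀ z₀ p.2 b hb).symm) p.1

theorem assocInvAux_pt (p : Smash x₀ y₀ × Z) (h : p.1 = Smash.pt x₀ y₀ ∨ p.2 = z₀) :
    assocInvAux x₀ y₀ z₀ p = Smash.pt x₀ (Smash.pt y₀ z₀) := by
  obtain ⟨u, z⟩ := p
  obtain ⟨xy, rfl⟩ := Quot.exists_rep u
  rcases h with h | h
  · dsimp at h
    have h2 := smashRel_of_mk_eq x₀ y₀ h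
    rcases h2 with h2 | ⟨h2, _⟩
    · exact assocInv_wedge_val x₀ y₀ z₀ z xy (by rw [h2]; exact Or.inl rfl)
    · exact assocInv_wedge_val x₀ y₀ z₀ z xy h2
  · dsimp at h
    have h1 : Smash.mk y₀ z₀ (xy.2, z) = Smash.pt y₀ z₀ :=
      Quot.sound (Or.inr ⟨Or.inr h, Or.inr rfl⟩)
    show Smash.mk x₀ (Smash.pt y₀ z₀) (xy.1, Smash.mk y₀ z₀ (xy.2, z)) = _
    rw [Smash.mk, h1]
    exact Quot.sound (Or.inr ⟨Or.inr rfl, Or.inr rfl⟩)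

/-- The inverse associator `(X ∧ Y) ∧ Z → X ∧ (Y ∧ Z)`. -/
def assocInvFun : Smash (Smash.pt x₀ y₀) z₀ → Smash x₀ (Smash.pt y₀ z₀) :=
  Quot.lift (assocInvAux x₀ y₀ z₀)
    (by
      rintro a b (rfl | ⟨ha, hb⟩)
      · rfl
      · exact (assocInvAux_pt x₀ y₀ z₀ a ha).trans (assocInvAux_pt x₀ y₀ z₀ b hb).symm)

theorem assoc_left_inv : Function.LeftInverse (assocInvFun x₀ y₀ z₀) (assocFun x₀ y₀ z₀) := by
  intro a
  obtain ⟨⟨x, w⟩, rfl⟩ := Quot.exists_rep a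
  obtain ⟨yz, rfl⟩ := Quot.exists_rep w
  rfl

theorem assoc_right_inv : Function.RightInverse (assocInvFun x₀ y₀ z₀) (assocFun x₀ y₀ z₀) := by
  intro a
  obtain ⟨⟨u, z⟩, rfl⟩ := Quot.exists_rep a
  obtain ⟨xy, rfl⟩ := Quot.exists_rep u
  rfl

theorem continuous_assocInvFun (hZ : IsExponentiable Z) :
    Continuous (assocInvFun x₀ y₀ z₀) := by
  apply continuous_quot_lift
  have h2 : IsQuotientMap (fun p : (X × Y) × Z => (Smash.mk x₀ y₀ p.1, p.2)) :=
    hZ (X × Y) (Smash x₀ y₀) _ _ _ isQuotientMap_quot_mk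
  rw [h2.continuous_iff]
  show Continuous fun p : (X × Y) × Z =>
    Smash.mk x₀ (Smash.pt y₀ z₀) (p.1.1, Smash.mk y₀ z₀ (p.1.2, p.2))
  exact (continuous_quot_mk).comp
    ((continuous_fst.fst).prodMk ((continuous_quot_mk).comp
      ((continuous_fst.snd).prodMk continuous_snd)))

theorem continuous_assocAux [CompactSpace Y] [CompactSpace Z] :
    Continuous (assocAux x₀ y₀ z₀) := by
  rw [continuous_def]
  intro U hU
  set g' : X × (Y × Z) → Smash (Smash.pt x₀ y₀) z₀ :=
    fun a => Smash.mk (Smash.pt x₀ y₀) z₀ (Smash.mk x₀ y₀ (a.1, a.2.1), a.2.2) with hg'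
  have hg'c : Continuous g' :=
    (continuous_quot_mk).comp
      (((continuous_quot_mk).comp
        (continuous_fst.prodMk (continuous_snd.fst))).prodMk (continuous_snd.snd))
  have hW' : IsOpen (g' ⁻¹' U) := hg'c.isOpen_preimage U hU
  rw [isOpen_iff_forall_mem_open]
  rintro ⟨x, w⟩ hxw
  obtain ⟨⟨y, z⟩, rfl⟩ := Quot.exists_rep w
  -- the wedge of Y × Z
  set K : Set (Y × Z) := {p | p.1 = y₀ ∨ p.2 = z₀} with hK
  have hKval : ∀ x' : X, ∀ k ∈ K, g' (x', k) = Smash.pt (Smash.pt x₀ y₀) z₀ := by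
    intro x' k hk
    exact assoc_wedge_val x₀ y₀ z₀ x' k hk
  obtain ⟨A, B, hA, hB, hxA, hyzB, hAB, hsat⟩ :
      ∃ A B, IsOpen A ∧ IsOpen B ∧ x ∈ A ∧ (y, z) ∈ B ∧ A ×ˢ B ⊆ g' ⁻¹' U ∧
        ∀ p q : Y × Z, smashRel y₀ z₀ p q → q ∈ B → p ∈ B := by
    by_cases hpt : Smash.pt (Smash.pt x₀ y₀) z₀ ∈ U
    · have hKc : IsCompact K := by
        have hKeq : K = ({y₀} ×ˢ (Set.univ : Set Z)) ∪ ((Set.univ : Set Y) ×ˢ {z₀}) := by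
          ext p
          simp only [hK, Set.mem_setOf_eq, Set.mem_union, Set.mem_prod,
            Set.mem_singleton_iff, Set.mem_univ, and_true, true_and]
        rw [hKeq]
        exact (isCompact_singleton.prod isCompact_univ).union
          (isCompact_univ.prod isCompact_singleton)
      have hsub : ({x} : Set X) ×ˢ insert (y, z) K ⊆ g' ⁻¹' U := by
        rintro ⟨x', p⟩ ⟨hx', hp⟩
        rw [Set.mem_singleton_iff] at hx'
        have hx'' : x' = x := hx'
        rw [Set.mem_insert_iff] at hp
        rcases hp with rfl | hpK
        · rw [Set.mem_preimage, hx'']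
          exact hxw
        · show g' (x', p) ∈ U
          rw [hKval x' p hpK]
          exact hpt
      obtain ⟨A, B, hA, hB, hxA, hKB, hAB⟩ :=
        generalized_tube_lemma isCompact_singleton (hKc.insert (y, z)) hW' hsub
      refine ⟨A, B, hA, hB, hxA rfl, hKB (Set.mem_insert _ _), hAB, ?_⟩
      rintro p q (rfl | ⟨hp, _⟩) hqB
      · exact hqB
      · exact hKB (Set.mem_insert_of_mem _ hp)
    · have hsub : ({x} : Set X) ×ˢ ({(y, z)} : Set (Y × Z)) ⊆ g' ⁻¹' U := by
        rintro ⟨x', p⟩ ⟨hx', hp⟩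
        rw [Set.mem_singleton_iff] at hx' hp
        have hx'' : x' = x := hx'
        have hp' : p = (y, z) := hp
        rw [Set.mem_preimage, hx'', hp']
        exact hxw
      obtain ⟨A, B, hA, hB, hxA, hKB, hAB⟩ :=
        generalized_tube_lemma isCompact_singleton isCompact_singleton hW' hsub
      have hBK : ∀ p ∈ B, p ∉ K := by
        intro p hpB hpK
        have hmem : (x, p) ∈ g' ⁻¹' U := hAB ⟨hxA rfl, hpB⟩
        rw [Set.mem_preimage, hKval x p hpK] at hmem
        exact hpt hmem
      refine ⟨A, B, hA, hB, hxA rfl, hKB rfl, hAB, ?_⟩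
      rintro p q (rfl | ⟨hp, hq⟩) hqB
      · exact hqB
      · exact absurd hq (hBK q hqB)
  refine ⟨A ×ˢ (Smash.mk y₀ z₀ '' B), ?_, hA.prod ?_, ⟨hxA, Set.mem_image_of_mem _ hyzB⟩⟩
  · rintro ⟨x', w'⟩ ⟨hx', y', hy'B, rfl⟩
    exact hAB (Set.mk_mem_prod hx' hy'B)
  · refine (isQuotientMap_quot_mk (r := smashRel y₀ z₀)).isOpen_preimage.mp ?_
    have : Quot.mk (smashRel y₀ z₀) ⁻¹' (Smash.mk y₀ z₀ '' B) = B := by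
      ext p
      constructor
      · rintro ⟨q, hqB, hq⟩
        exact hsat p q (smashRel_of_mk_eq y₀ z₀ hq.symm) hqB
      · intro hp
        exact Set.mem_image_of_mem _ hp
    exact (congrArg IsOpen this).mpr hB

end Aux

/-- If `Y` is compact and `Z` is compact and exponentiable, the triple `(X, Y, Z)` is
(regularly) associative: the associator `κ : X ∧ (Y ∧ Z) → (X ∧ Y) ∧ Z` is a pointed
homeomorphism. In particular the smash product of compact Hausdorff pointed spaces
is associative. -/
theorem smash_assoc_of_compact {X Y Z : Type} [TopologicalSpace X] [TopologicalSpace Y]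
    [TopologicalSpace Z] (x₀ : X) (y₀ : Y) (z₀ : Z)
    (hY : CompactSpace Y) (hZc : CompactSpace Z) (hZ : IsExponentiable Z) :
    ∃ h : Smash x₀ (Smash.pt y₀ z₀) ≃ₜ Smash (Smash.pt x₀ y₀) z₀,
      h (Smash.pt x₀ (Smash.pt y₀ z₀)) = Smash.pt (Smash.pt x₀ y₀) z₀ ∧
      ∀ (x : X) (y : Y) (z : Z),
        h (Smash.mk _ _ (x, Smash.mk y₀ z₀ (y, z))) =
          Smash.mk _ _ (Smash.mk x₀ y₀ (x, y), z) := by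
  refine ⟨⟨⟨assocFun x₀ y₀ z₀, assocInvFun x₀ y₀ z₀,
    assoc_left_inv x₀ y₀ z₀, assoc_right_inv x₀ y₀ z₀⟩,
    continuous_quot_lift _ (continuous_assocAux x₀ y₀ z₀),
    continuous_assocInvFun x₀ y₀ z₀ hZ⟩, rfl, fun x y z => rfl⟩
end

section
/- If Y and Z are compact exponentiable pointed spaces then Y ∧ Z is exponentiable, i.e., the functor − ∧ (Y ∧ Z) on pointed spaces has a right adjoint. -/
open Topology

section Aux

variable {Y Z : Type*} [TopologicalSpace Y] [TopologicalSpace Z]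

theorem smashRel_equivalence_s8 (y₀ : Y) (z₀ : Z) : Equivalence (smashRel y₀ z₀) := by
  constructor
  · intro p; exact Or.inl rfl
  · rintro p q (rfl | ⟨hp, hq⟩)
    · exact Or.inl rfl
    · exact Or.inr ⟨hq, hp⟩
  · rintro p q r (rfl | ⟨hp, hq⟩) h
    · exact h
    · rcases h with rfl | ⟨_, hr⟩
      · exact Or.inr ⟨hp, hq⟩
      · exact Or.inr ⟨hp, hr⟩

theorem Smash.mk_eq_iff (y₀ : Y) (z₀ : Z) {p q : Y × Z} :
    Smash.mk y₀ z₀ p = Smash.mk y₀ z₀ q ↔ smashRel y₀ z₀ p q := by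
  constructor
  · intro h
    exact ((smashRel_equivalence_s8 y₀ z₀).eqvGen_iff).mp (Quot.eqvGen_exact h)
  · exact Quot.sound

theorem Smash.continuous_mk (y₀ : Y) (z₀ : Z) : Continuous (Smash.mk y₀ z₀) :=
  continuous_quot_mk

/-- The wedge, as a subset of `Y × Z`. -/
def smashWedge (y₀ : Y) (z₀ : Z) : Set (Y × Z) := {p | p.1 = y₀ ∨ p.2 = z₀}

theorem isCompact_smashWedge (y₀ : Y) (z₀ : Z) [CompactSpace Y] [CompactSpace Z] :
    IsCompact (smashWedge y₀ z₀) := by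
  have : smashWedge y₀ z₀ = ({y₀} ×ˢ (Set.univ : Set Z)) ∪ ((Set.univ : Set Y) ×ˢ {z₀}) := by
    ext p
    constructor
    · rintro (h | h)
      · exact Or.inl ⟨h, trivial⟩
      · exact Or.inr ⟨trivial, h⟩
    · rintro (⟨h, -⟩ | ⟨-, h⟩)
      · exact Or.inl h
      · exact Or.inr h
  rw [this]
  exact (isCompact_singleton.prod isCompact_univ).union
    (isCompact_univ.prod isCompact_singleton)

/-- Key lemma: crossing the quotient map `Y × Z → Y ∧ Z` with any identity gives a
quotient map, thanks to compactness of the wedge (tube lemma). -/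
theorem isQuotientMap_id_prod_smashMk (y₀ : Y) (z₀ : Z) [CompactSpace Y] [CompactSpace Z]
    (C : Type*) [TopologicalSpace C] :
    IsQuotientMap (fun p : C × (Y × Z) => (p.1, Smash.mk y₀ z₀ p.2)) := by
  set q := Smash.mk y₀ z₀ with hq
  have hqsurj : Function.Surjective q := fun s => Quot.induction_on s (fun p => ⟨p, rfl⟩)
  have hqcont : Continuous fun p : C × (Y × Z) => (p.1, q p.2) :=
    continuous_fst.prodMk ((Smash.continuous_mk y₀ z₀).comp continuous_snd)
  simp_rw [isQuotientMap_iff, isCoinducing_iff, and_comm, iff_comm]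
  refine ⟨fun s => ?_, fun U => ?_⟩
  · obtain ⟨p, hp⟩ := hqsurj s.2
    exact ⟨(s.1, p), Prod.ext rfl hp⟩
  refine ⟨fun hU => (hU.preimage hqcont), fun hV => ?_⟩
  set V := (fun p : C × (Y × Z) => (p.1, q p.2)) ⁻¹' U with hVdef
  -- saturation of V in the second coordinate
  have hsat : ∀ c : C, ∀ k₁ k₂ : Y × Z, (c, k₁) ∈ V → k₁ ∈ smashWedge y₀ z₀ →
      k₂ ∈ smashWedge y₀ z₀ → (c, k₂) ∈ V := by
    intro c k₁ k₂ h1 hk1 hk2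
    have : q k₁ = q k₂ := Quot.sound (Or.inr ⟨hk1, hk2⟩)
    simpa [hVdef, ← this] using h1
  rw [isOpen_iff_forall_mem_open]
  rintro ⟨c, s⟩ hcs
  obtain ⟨k, rfl⟩ := hqsurj s
  have hck : (c, k) ∈ V := hcs
  obtain ⟨N₀, V₀, hN₀, hV₀, hcN₀, hkV₀, hbox⟩ := isOpen_prod_iff.mp hV c k hck
  -- produce a saturated open set V' ∋ k and open N ∋ c with N ×ˢ V' ⊆ V
  have : ∃ (N : Set C) (V' : Set (Y × Z)), IsOpen N ∧ IsOpen V' ∧ c ∈ N ∧ k ∈ V' ∧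
      (N ×ˢ V' ⊆ V) ∧ (q ⁻¹' (q '' V') = V') := by
    by_cases hmeet : (V₀ ∩ smashWedge y₀ z₀).Nonempty
    · obtain ⟨w, hwV₀, hwW⟩ := hmeet
      -- the whole wedge fiber over c is in V; apply the tube lemma
      have hfiber : ({c} ×ˢ smashWedge y₀ z₀ : Set (C × (Y × Z))) ⊆ V := by
        rintro ⟨c', k'⟩ ⟨hc', hk'⟩
        rw [Set.mem_singleton_iff] at hc'
        subst hc'
        exact hsat _ w k' (hbox ⟨hcN₀, hwV₀⟩) hwW hk'
      obtain ⟨N₁, O, hN₁, hO, hcN₁, hWO, htube⟩ :=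
        generalized_tube_lemma isCompact_singleton (isCompact_smashWedge y₀ z₀) hV hfiber
      refine ⟨N₀ ∩ N₁, V₀ ∪ O, hN₀.inter hN₁, hV₀.union hO, ⟨hcN₀, hcN₁ rfl⟩,
        Or.inl hkV₀, ?_, ?_⟩
      · rintro ⟨c', u⟩ ⟨⟨hc1, hc2⟩, hu⟩
        rcases hu with hu | hu
        · exact hbox ⟨hc1, hu⟩
        · exact htube ⟨hc2, hu⟩
      · apply Set.Subset.antisymm
        · rintro k' hk'
          obtain ⟨k'', hk'', hqk⟩ := hk'
          rcases (Smash.mk_eq_iff y₀ z₀).mp hqk with rfl | ⟨hk''W, hk'W⟩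
          · exact hk''
          · exact Or.inr (hWO hk'W)
        · exact Set.subset_preimage_image _ _
    · -- V₀ misses the wedge, hence is saturated
      refine ⟨N₀, V₀, hN₀, hV₀, hcN₀, hkV₀, hbox, ?_⟩
      apply Set.Subset.antisymm
      · rintro k' hk'
        obtain ⟨k'', hk'', hqk⟩ := hk'
        rcases (Smash.mk_eq_iff y₀ z₀).mp hqk with rfl | ⟨hk''W, _⟩
        · exact hk''
        · exact absurd ⟨k'', hk'', hk''W⟩ hmeet
      · exact Set.subset_preimage_image _ _
  obtain ⟨N, V', hN, hV', hcN, hkV', hNV', hsatV'⟩ := this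
  refine ⟨N ×ˢ (q '' V'), ?_, hN.prod ?_, ⟨hcN, ⟨k, hkV', rfl⟩⟩⟩
  · rintro ⟨c', s'⟩ ⟨hc', k', hk', rfl⟩
    exact hNV' (Set.mk_mem_prod hc' hk')
  · show IsOpen (q '' V')
    have : IsOpen (q ⁻¹' (q '' V')) := by rw [hsatV']; exact hV'
    exact this
end Aux

/-- If `Y` and `Z` are compact exponentiable pointed spaces, then `Y ∧ Z` is
exponentiable (equivalently, by Cagliari's theorem, `− ∧ (Y ∧ Z)` has a right
adjoint on pointed spaces). -/
theorem smash_exponentiable_of_compact_exponentiable {Y Z : Type} [TopologicalSpace Y]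
    [TopologicalSpace Z] (y₀ : Y) (z₀ : Z)
    (hYc : CompactSpace Y) (hZc : CompactSpace Z)
    (hY : IsExponentiable Y) (hZ : IsExponentiable Z) :
    IsExponentiable (Smash y₀ z₀) := by
  intro B C tB tC f hf
  set q := Smash.mk y₀ z₀ with hqdef
  -- f × id_{Y×Z} is a quotient map, using exponentiability of Y and Z
  have h1 : IsQuotientMap (fun p : B × Y => (f p.1, p.2)) := hY B C tB tC f hf
  have h2 : IsQuotientMap (fun p : (B × Y) × Z => ((f p.1.1, p.1.2), p.2)) := by
    have := hZ (B × Y) (C × Y) inferInstance inferInstance _ h1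
    convert this using 2
  have h3 : IsQuotientMap (fun p : B × (Y × Z) => (f p.1, p.2)) := by
    have hB := (Homeomorph.prodAssoc B Y Z).symm.isQuotientMap
    have hC := (Homeomorph.prodAssoc C Y Z).isQuotientMap
    have := (hC.comp h2).comp hB
    convert this using 1
    exact funext fun p => rfl
  have h4 := isQuotientMap_id_prod_smashMk y₀ z₀ C
  have h5 := isQuotientMap_id_prod_smashMk y₀ z₀ B
  have hcomp : IsQuotientMap ((fun p : C × (Y × Z) => (p.1, q p.2)) ∘
      (fun p : B × (Y × Z) => (f p.1, p.2))) := h4.comp h3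
  have heq : ((fun p : C × (Y × Z) => (p.1, q p.2)) ∘
      (fun p : B × (Y × Z) => (f p.1, p.2))) =
      ((fun p : B × Smash y₀ z₀ => (f p.1, p.2)) ∘
      (fun p : B × (Y × Z) => (p.1, q p.2))) := rfl
  rw [heq] at hcomp
  exact IsQuotientMap.of_comp h5.continuous
    (hf.continuous.prodMap continuous_id) hcomp
end

section
/- Let X be the half-open interval [0,1) pointed at 0 and Y any non-degenerate real interval containing its basepoint 0 (e.g. Y = [0,1] or Y = [0,1)). Then the basepoint of the smash product X ∧ Y has no compact neighbourhood; in particular X ∧ Y is not locally compact. -/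
open Topology

/-- `[0,1)` pointed at `0`. -/
def Ico01pt : Set.Ico (0:ℝ) 1 := ⟨0, by constructor <;> norm_num⟩

section Aux

open Classical

variable {X Y : Type*} (x₀ : X) (y₀ : Y)

/-- First coordinate, sending the wedge class to `x₀`. -/
noncomputable def smashFst : Smash x₀ y₀ → X :=
  Quot.lift (fun p => if p.1 = x₀ ∨ p.2 = y₀ then x₀ else p.1)
    (by
      intro p q h
      rcases h with h | ⟨hp, hq⟩
      · rw [h]
      · rw [if_pos hp, if_pos hq])

/-- Second coordinate, sending the wedge class to `y₀`. -/
noncomputable def smashSnd : Smash x₀ y₀ → Y :=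
  Quot.lift (fun p => if p.1 = x₀ ∨ p.2 = y₀ then y₀ else p.2)
    (by
      intro p q h
      rcases h with h | ⟨hp, hq⟩
      · rw [h]
      · rw [if_pos hp, if_pos hq])

lemma smashFst_mk (p : X × Y) (h1 : p.1 ≠ x₀) (h2 : p.2 ≠ y₀) :
    smashFst x₀ y₀ (Smash.mk x₀ y₀ p) = p.1 := by
  show (if p.1 = x₀ ∨ p.2 = y₀ then x₀ else p.1) = p.1
  rw [if_neg]
  rintro (h | h) <;> [exact h1 h; exact h2 h]

lemma smashSnd_mk (p : X × Y) (h1 : p.1 ≠ x₀) (h2 : p.2 ≠ y₀) :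
    smashSnd x₀ y₀ (Smash.mk x₀ y₀ p) = p.2 := by
  show (if p.1 = x₀ ∨ p.2 = y₀ then y₀ else p.2) = p.2
  rw [if_neg]
  rintro (h | h) <;> [exact h1 h; exact h2 h]

lemma smashFst_pt : smashFst x₀ y₀ (Smash.pt x₀ y₀) = x₀ := by
  show (if (x₀, y₀).1 = x₀ ∨ (x₀, y₀).2 = y₀ then x₀ else (x₀, y₀).1) = x₀
  rw [if_pos (Or.inl rfl)]

lemma smash_mk_wedge (p : X × Y) (h : p.1 = x₀ ∨ p.2 = y₀) :
    Smash.mk x₀ y₀ p = Smash.pt x₀ y₀ :=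
  Quot.sound (Or.inr ⟨h, Or.inl rfl⟩)

end Aux

/-- Let `X = [0,1)` pointed at `0`, and `Y` any non-degenerate real interval containing
its basepoint `0`. Then the basepoint of `X ∧ Y` has no compact neighbourhood; in
particular `X ∧ Y` is not locally compact. -/
theorem smash_Ico_no_compact_nhd (Y : Set ℝ) (hY : Y.OrdConnected) (h0 : (0:ℝ) ∈ Y)
    (hnt : Y.Nontrivial) :
    ∀ K : Set (Smash Ico01pt (⟨0, h0⟩ : Y)),
      K ∈ 𝓝 (Smash.pt Ico01pt (⟨0, h0⟩ : Y)) → ¬ IsCompact K := by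
  classical
  set y0 : Y := (⟨0, h0⟩ : Y) with hy0
  intro K hK hKc
  -- a "direction" c: for all t ∈ (0,1], c*t ∈ Y and c*t ≠ 0
  obtain ⟨c, hc0, hcY⟩ : ∃ c : ℝ, c ≠ 0 ∧ ∀ t : ℝ, 0 < t → t ≤ 1 → c * t ∈ Y := by
    obtain ⟨a, ha, b, hb, hab⟩ := hnt
    have hex : ∃ c ∈ Y, c ≠ 0 := by
      rcases eq_or_ne a 0 with h | h
      · exact ⟨b, hb, by rw [h] at hab; exact fun hb0 => hab hb0.symm⟩
      · exact ⟨a, ha, h⟩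
    obtain ⟨c, hcm, hc0⟩ := hex
    refine ⟨c, hc0, fun t ht ht1 => ?_⟩
    rcases hc0.lt_or_gt with h | h
    · exact hY.out hcm h0 ⟨by nlinarith, by nlinarith⟩
    · exact hY.out h0 hcm ⟨by nlinarith, by nlinarith⟩
  set S : Set (↥(Set.Ico (0:ℝ) 1) × ↥Y) := Smash.mk Ico01pt y0 ⁻¹' K with hSdef
  have hmkc : Continuous (Smash.mk Ico01pt y0) := continuous_quot_mk
  have hS : ∀ x : ↥(Set.Ico (0:ℝ) 1), S ∈ 𝓝 (x, y0) := by
    intro x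
    apply hmkc.continuousAt.preimage_mem_nhds
    rw [smash_mk_wedge Ico01pt y0 (x, y0) (Or.inr rfl)]
    exact hK
  -- the x-coordinates tending to 1
  set xn : ℕ → ℝ := fun n => 1 - 1/((n:ℝ)+2) with hxn
  have hxn_bdd : ∀ n : ℕ, 0 < 1/((n:ℝ)+2) ∧ 1/((n:ℝ)+2) ≤ 1/2 := by
    intro n
    have hn : (0:ℝ) ≤ (n:ℝ) := Nat.cast_nonneg n
    constructor
    · positivity
    · exact one_div_le_one_div_of_le (by norm_num) (by linarith)
  have hxn_mem : ∀ n, xn n ∈ Set.Ico (0:ℝ) 1 := by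
    intro n
    obtain ⟨h1, h2⟩ := hxn_bdd n
    exact ⟨by simp only [hxn]; linarith, by simp only [hxn]; linarith⟩
  have hxn_pos : ∀ n, 0 < xn n := by
    intro n
    obtain ⟨h1, h2⟩ := hxn_bdd n
    simp only [hxn]; linarith
  have hxn_smono : StrictMono xn := by
    intro n m hnm
    have hc : ((n:ℝ)+2) < ((m:ℝ)+2) := by
      have := Nat.cast_lt (α := ℝ).mpr hnm
      linarith
    have := one_div_lt_one_div_of_lt (by positivity) hc
    simp only [hxn]; linarith
  set Xn : ℕ → ↥(Set.Ico (0:ℝ) 1) := fun n => ⟨xn n, hxn_mem n⟩ with hXn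
  have hXne : ∀ n, Xn n ≠ Ico01pt := by
    intro n h
    have := congrArg Subtype.val h
    simp only [hXn, Ico01pt] at this
    exact absurd this (ne_of_gt (hxn_pos n))
  -- choose y-coordinates
  have hsel : ∀ n, ∃ y : ↥Y, (y:ℝ) ≠ 0 ∧ (Xn n, y) ∈ S := by
    intro n
    obtain ⟨u, hu, v, hv, huv⟩ := mem_nhds_prod_iff.mp (hS (Xn n))
    obtain ⟨w, hw, hwv⟩ := (mem_nhds_subtype _ _ _).mp hv
    obtain ⟨δ, hδ, hball⟩ := Metric.mem_nhds_iff.mp hw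
    set t : ℝ := min 1 (δ/(|c|+1)) with ht
    have ht0 : 0 < t := lt_min one_pos (by positivity)
    have ht1 : t ≤ 1 := min_le_left _ _
    have hyY : c * t ∈ Y := hcY t ht0 ht1
    have hyne : c * t ≠ 0 := mul_ne_zero hc0 (ne_of_gt ht0)
    have habs : |c * t| < δ := by
      rw [abs_mul, abs_of_pos ht0]
      have h1 : (0:ℝ) < |c| + 1 := by positivity
      calc |c| * t ≤ |c| * (δ/(|c|+1)) :=
            mul_le_mul_of_nonneg_left (min_le_right _ _) (abs_nonneg c)
        _ < δ := by
            rw [mul_div_assoc', div_lt_iff₀ h1]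
            nlinarith [abs_nonneg c]
    have hmemv : (⟨c*t, hyY⟩ : ↥Y) ∈ v := by
      apply hwv
      apply hball
      show c * t ∈ Metric.ball ((y0 : ℝ)) δ
      simp only [hy0, Metric.mem_ball, Real.dist_eq, sub_zero]
      exact habs
    exact ⟨⟨c*t, hyY⟩, hyne, huv ⟨mem_of_mem_nhds hu, hmemv⟩⟩
  choose Yn hYne hYS using hsel
  have hYne' : ∀ n, Yn n ≠ y0 := by
    intro n h
    exact hYne n (congrArg Subtype.val h)
  set q : ℕ → Smash Ico01pt y0 := fun n => Smash.mk Ico01pt y0 (Xn n, Yn n) with hq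
  have hfst : ∀ n, smashFst Ico01pt y0 (q n) = Xn n := fun n =>
    smashFst_mk Ico01pt y0 (Xn n, Yn n) (hXne n) (hYne' n)
  have hsnd : ∀ n, smashSnd Ico01pt y0 (q n) = Yn n := fun n =>
    smashSnd_mk Ico01pt y0 (Xn n, Yn n) (hXne n) (hYne' n)
  have hq_inj : Function.Injective q := by
    intro n m h
    have h2 := congrArg (smashFst Ico01pt y0) h
    rw [hfst n, hfst m] at h2
    have h3 : xn n = xn m := congrArg Subtype.val h2
    exact hxn_smono.injective h3
  -- preimage of the image of any index set
  have hpre : ∀ I : Set ℕ,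
      Smash.mk Ico01pt y0 ⁻¹' (q '' I) = (fun n => ((Xn n, Yn n) : _ × _)) '' I := by
    intro I
    ext p
    simp only [Set.mem_preimage, Set.mem_image]
    constructor
    · rintro ⟨n, hn, hqn⟩
      refine ⟨n, hn, ?_⟩
      by_cases hw : p.1 = Ico01pt ∨ p.2 = y0
      · exfalso
        have hp : Smash.mk Ico01pt y0 p = Smash.pt Ico01pt y0 := smash_mk_wedge _ _ p hw
        have h2 := congrArg (smashFst Ico01pt y0) (hqn.trans hp)
        rw [hfst n, smashFst_pt] at h2
        exact hXne n h2
      · push_neg at hw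
        have h2 := congrArg (smashFst Ico01pt y0) hqn
        rw [hfst n, smashFst_mk _ _ p hw.1 hw.2] at h2
        have h3 := congrArg (smashSnd Ico01pt y0) hqn
        rw [hsnd n, smashSnd_mk _ _ p hw.1 hw.2] at h3
        exact Prod.ext h2 h3
    · rintro ⟨n, hn, rfl⟩
      exact ⟨n, hn, rfl⟩
  -- closedness of images downstairs
  have hDclosed : ∀ I : Set ℕ, IsClosed ((fun n => ((Xn n, Yn n) : _ × _)) '' I) := by
    intro I
    rw [← isOpen_compl_iff, isOpen_iff_forall_mem_open]
    rintro ⟨a, b⟩ hp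
    have ha1 : (a:ℝ) < 1 := a.2.2
    obtain ⟨m, hm⟩ : ∃ m : ℕ, 1/((m:ℝ)+1) < 1 - (a:ℝ) := exists_nat_one_div_lt (by linarith)
    have hma : (a:ℝ) < xn m := by
      have h1 : 1/((m:ℝ)+2) ≤ 1/((m:ℝ)+1) :=
        one_div_le_one_div_of_le (by positivity) (by linarith)
      simp only [hxn]; linarith
    set O : Set (↥(Set.Ico (0:ℝ) 1) × ↥Y) := {p | (p.1:ℝ) < xn m} with hO
    have hOopen : IsOpen O := by
      have hcont : Continuous fun p : ↥(Set.Ico (0:ℝ) 1) × ↥Y => (p.1 : ℝ) :=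
        continuous_subtype_val.comp continuous_fst
      exact hcont.isOpen_preimage (Set.Iio (xn m)) isOpen_Iio
    have hfin : (((fun n => ((Xn n, Yn n) : _ × _)) '' I) ∩ O).Finite := by
      apply Set.Finite.subset ((Set.finite_Iio m).image (fun n => ((Xn n, Yn n) : _ × _)))
      rintro p ⟨⟨n, hn, rfl⟩, hpO⟩
      refine ⟨n, ?_, rfl⟩
      have hlt : xn n < xn m := hpO
      exact hxn_smono.lt_iff_lt.mp hlt
    refine ⟨O \ (((fun n => ((Xn n, Yn n) : _ × _)) '' I) ∩ O), ?_, ?_, ?_⟩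
    · rintro p ⟨hpO, hpn⟩ hmem
      exact hpn ⟨hmem, hpO⟩
    · exact hOopen.sdiff hfin.isClosed
    · exact ⟨hma, fun hmem => hp hmem.1⟩
  have hqm : IsQuotientMap (Smash.mk Ico01pt y0) := isQuotientMap_quot_mk
  have hqclosed : ∀ I : Set ℕ, IsClosed (q '' I) := by
    intro I
    rw [← hqm.isClosed_preimage, hpre I]
    exact hDclosed I
  -- the open cover with no finite subcover
  set U : ℕ → Set (Smash Ico01pt y0) :=
    fun m => (q '' ({m}ᶜ))ᶜ ∪ (q '' Set.univ)ᶜ with hU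
  have hUopen : ∀ m, IsOpen (U m) :=
    fun m => ((hqclosed _).isOpen_compl).union ((hqclosed _).isOpen_compl)
  have hcover : K ⊆ ⋃ m, U m := by
    intro k hk
    by_cases hkC : k ∈ q '' Set.univ
    · obtain ⟨n, -, rfl⟩ := hkC
      refine Set.mem_iUnion.mpr ⟨n, Or.inl ?_⟩
      rintro ⟨j, hj, hjq⟩
      exact hj (hq_inj hjq)
    · exact Set.mem_iUnion.mpr ⟨0, Or.inr hkC⟩
  obtain ⟨F, hF⟩ := hKc.elim_finite_subcover U hUopen hcover
  set n : ℕ := F.sup id + 1 with hn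
  have hnF : n ∉ F := by
    intro h
    have := Finset.le_sup (f := id) h
    simp only [id] at this
    omega
  have hqn : q n ∈ K := hYS n
  have hmem := hF hqn
  rw [Set.mem_iUnion₂] at hmem
  obtain ⟨m, hmF, hm⟩ := hmem
  rcases hm with hm | hm
  · exact hm ⟨n, fun h => hnF (by rwa [h]), rfl⟩
  · exact hm ⟨n, Set.mem_univ n, rfl⟩
end

section
/- Let X be a pointed space with an infinite closed discrete subspace D, and Y a pointed space with a discrete subspace E such that the closure of E equals E ∪ {0_Y} with 0_Y ∉ E and every point of E closed in E ∪ {0_Y}. Then the smash product X ∧ Y is not locally compact: the basepoint has no compact neighbourhood. If moreover X and Y are Hausdorff, X ∧ Y is not exponentiable. -/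
open Topology

/-- smashRel is an equivalence relation. -/
theorem smashRel_equivalence_s19 {X Y : Type*} [TopologicalSpace X] [TopologicalSpace Y]
    (x₀ : X) (y₀ : Y) : Equivalence (smashRel x₀ y₀) := by
  constructor
  · intro q; exact Or.inl rfl
  · rintro p q (rfl | ⟨h1, h2⟩); · exact Or.inl rfl
    · exact Or.inr ⟨h2, h1⟩
  · rintro p q r (rfl | ⟨h1, h2⟩) (rfl | ⟨h3, h4⟩)
    · exact Or.inl rfl
    · exact Or.inr ⟨h3, h4⟩
    · exact Or.inr ⟨h1, h2⟩
    · exact Or.inr ⟨h1, h4⟩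

theorem smash_mk_eq_iff {X Y : Type*} [TopologicalSpace X] [TopologicalSpace Y]
    (x₀ : X) (y₀ : Y) (p q : X × Y) :
    Smash.mk x₀ y₀ p = Smash.mk x₀ y₀ q ↔ smashRel x₀ y₀ p q :=
  ⟨fun h => ((smashRel_equivalence_s19 x₀ y₀).eqvGen_iff).mp (Quot.eqvGen_exact h),
   fun h => Quot.sound h⟩

/-- The cofinite-at-infinity topology on `Option ι`. -/
def auxTop (ι : Type) : TopologicalSpace (Option ι) where
  IsOpen O := none ∈ O → Oᶜ.Finite
  isOpen_univ := by simp
  isOpen_inter := by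
    intro s t hs ht hst
    rw [Set.compl_inter]
    exact (hs hst.1).union (ht hst.2)
  isOpen_sUnion := by
    intro S hS hmem
    obtain ⟨O, hOS, hO⟩ := hmem
    exact ((hS O hOS) hO).subset (Set.compl_subset_compl.mpr (Set.subset_sUnion_of_mem hOS))

theorem auxTop_isOpen_iff {ι : Type} (s : Set (Option ι)) :
    IsOpen[auxTop ι] s ↔ (none ∈ s → sᶜ.Finite) := Iff.rfl
/-- If `X` has an infinite closed discrete subspace `D`, and `Y` has a discrete
subspace `E` whose closure is the disjoint union `E ∪ {y₀}` with every point of `E`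
closed in `E ∪ {y₀}`, then the basepoint of `X ∧ Y` has no compact neighbourhood
(so `X ∧ Y` is not locally compact); if moreover `X` and `Y` are Hausdorff, then
`X ∧ Y` is not exponentiable. -/
theorem smash_not_locallyCompact_of_discrete_subspaces {X Y : Type} [TopologicalSpace X]
    [TopologicalSpace Y] (x₀ : X) (y₀ : Y)
    (D : Set X) (hD_inf : D.Infinite) (hD_closed : IsClosed D) (hD_disc : DiscreteTopology D)
    (E : Set Y) (hE_disc : DiscreteTopology E) (hE_cl : closure E = insert y₀ E)
    (hy₀ : y₀ ∉ E)
    (hE_pts : ∀ e ∈ E, IsClosed {z : (insert y₀ E : Set Y) | (z : Y) = e}) :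
    (∀ K : Set (Smash x₀ y₀), K ∈ 𝓝 (Smash.pt x₀ y₀) → ¬ IsCompact K) ∧
    (T2Space X → T2Space Y → ¬ IsExponentiable (Smash x₀ y₀)) := by
  classical
  set D' : Set X := D \ {x₀} with hD'def
  have hD'_inf : D'.Infinite := hD_inf.diff (Set.finite_singleton x₀)
  have hD'D : D' ⊆ D := Set.diff_subset
  -- discreteness of D: isolating open sets
  have hDnbhd : ∀ d ∈ D, ∃ U : Set X, IsOpen U ∧ d ∈ U ∧ U ∩ D = {d} := by
    intro d hd
    have hopen : IsOpen {x : D | (x : X) = d} := isOpen_discrete _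
    rw [isOpen_induced_iff] at hopen
    obtain ⟨U, hU, hUeq⟩ := hopen
    refine ⟨U, hU, ?_, ?_⟩
    · have : (⟨d, hd⟩ : D) ∈ {x : D | (x : X) = d} := rfl
      rw [← hUeq] at this; exact this
    · ext x
      constructor
      · rintro ⟨hxU, hxD⟩
        have : (⟨x, hxD⟩ : D) ∈ Subtype.val ⁻¹' U := hxU
        rw [hUeq] at this
        exact this
      · rintro rfl
        have : (⟨x, hd⟩ : D) ∈ {z : D | (z : X) = x} := rfl
        rw [← hUeq] at this
        exact ⟨this, hd⟩
  -- points of E are "closed" relative to insert y₀ E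
  have hEpt : ∀ e ∈ E, ∀ y, y ∈ closure {e} → y = e := by
    intro e he y hy
    have hyT : y ∈ insert y₀ E := by
      rw [← hE_cl]
      exact closure_mono (Set.singleton_subset_iff.mpr he) hy
    obtain ⟨C, hC, hCeq⟩ := isClosed_induced_iff.mp (hE_pts e he)
    have heC : e ∈ C := by
      have : (⟨e, Set.mem_insert_of_mem _ he⟩ : (insert y₀ E : Set Y)) ∈
          {z : (insert y₀ E : Set Y) | (z : Y) = e} := rfl
      rw [← hCeq] at this
      exact this
    have hyC : y ∈ C := hC.closure_subset_iff.mpr (Set.singleton_subset_iff.mpr heC) hy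
    have : (⟨y, hyT⟩ : (insert y₀ E : Set Y)) ∈ Subtype.val ⁻¹' C := hyC
    rw [hCeq] at this
    exact this
  have hy₀cl : y₀ ∈ closure E := by rw [hE_cl]; exact Set.mem_insert _ _
  -- graphs of transversals are closed in X × Y
  have graph_closed : ∀ (σ : X → Y), (∀ d ∈ D', σ d ∈ E) → ∀ J ⊆ D',
      IsClosed {q : X × Y | q.1 ∈ J ∧ q.2 = σ q.1} := by
    intro σ hσ J hJ
    rw [← isOpen_compl_iff]
    rw [isOpen_iff_forall_mem_open]
    rintro ⟨x, y⟩ hxy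
    simp only [Set.mem_compl_iff, Set.mem_setOf_eq, not_and] at hxy
    by_cases hxD : x ∈ D
    · obtain ⟨U, hU, hxU, hUD⟩ := hDnbhd x hxD
      by_cases hxJ : x ∈ J
      · have hyne : y ≠ σ x := hxy hxJ
        have hyncl : y ∉ closure {σ x} := fun hmem => hyne (hEpt _ (hσ x (hJ hxJ)) y hmem)
        refine ⟨U ×ˢ (closure {σ x})ᶜ, ?_, ?_, ?_⟩
        · rintro ⟨x', y'⟩ ⟨hx'U, hy'⟩
          simp only [Set.mem_compl_iff, Set.mem_setOf_eq, not_and]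
          intro hx'J heq
          have : x' = x := by
            have : x' ∈ U ∩ D := ⟨hx'U, hJ.trans hD'D hx'J⟩
            rwa [hUD] at this
          subst this
          exact hy' (heq ▸ subset_closure rfl)
        · exact hU.prod (isClosed_closure.isOpen_compl)
        · exact ⟨hxU, hyncl⟩
      · refine ⟨U ×ˢ Set.univ, ?_, hU.prod isOpen_univ, ⟨hxU, trivial⟩⟩
        rintro ⟨x', y'⟩ ⟨hx'U, -⟩
        simp only [Set.mem_compl_iff, Set.mem_setOf_eq, not_and]
        intro hx'J
        have : x' = x := by
          have : x' ∈ U ∩ D := ⟨hx'U, hJ.trans hD'D hx'J⟩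
          rwa [hUD] at this
        exact absurd (this ▸ hx'J) hxJ
    · refine ⟨Dᶜ ×ˢ Set.univ, ?_, hD_closed.isOpen_compl.prod isOpen_univ, ⟨hxD, trivial⟩⟩
      rintro ⟨x', y'⟩ ⟨hx'U, -⟩
      simp only [Set.mem_compl_iff, Set.mem_setOf_eq, not_and]
      intro hx'J
      exact absurd (hJ.trans hD'D hx'J) hx'U
  -- the projection is a quotient map
  have hquot : IsQuotientMap (Smash.mk x₀ y₀ : X × Y → Smash x₀ y₀) :=
    isQuotientMap_quot_mk
  -- preimage of the image of a transversal
  have mk_preimage : ∀ (σ : X → Y), (∀ d ∈ D', σ d ∈ E) → ∀ J ⊆ D',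
      (Smash.mk x₀ y₀) ⁻¹' ((fun d => Smash.mk x₀ y₀ (d, σ d)) '' J)
        = {q : X × Y | q.1 ∈ J ∧ q.2 = σ q.1} := by
    intro σ hσ J hJ
    ext ⟨x, y⟩
    simp only [Set.mem_preimage, Set.mem_image, Set.mem_setOf_eq]
    constructor
    · rintro ⟨d, hdJ, heq⟩
      rcases (smash_mk_eq_iff x₀ y₀ _ _).mp heq with heq' | ⟨hw, -⟩
      · obtain ⟨h1, h2⟩ := Prod.mk.injEq .. ▸ heq'.symm
        exact ⟨h1 ▸ hdJ, by rw [h2, h1]⟩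
      · rcases hw with h | h
        · exact absurd h (hJ hdJ).2
        · exact absurd (h ▸ hσ d (hJ hdJ)) hy₀
    · rintro ⟨hxJ, rfl⟩
      exact ⟨x, hxJ, rfl⟩
  -- images of transversals are closed in the smash product
  have image_closed : ∀ (σ : X → Y), (∀ d ∈ D', σ d ∈ E) → ∀ J ⊆ D',
      IsClosed ((fun d => Smash.mk x₀ y₀ (d, σ d)) '' J) := by
    intro σ hσ J hJ
    rw [← hquot.isClosed_preimage, mk_preimage σ hσ J hJ]
    exact graph_closed σ hσ J hJ
  -- injectivity of transversals
  have mk_inj : ∀ (d d' : X) (e e' : Y), d ∈ D' → d' ∈ D' → e ∈ E → e' ∈ E →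
      Smash.mk x₀ y₀ (d, e) = Smash.mk x₀ y₀ (d', e') → d = d' ∧ e = e' := by
    intro d d' e e' hd hd' he he' heq
    rcases (smash_mk_eq_iff x₀ y₀ _ _).mp heq with heq' | ⟨hw, -⟩
    · exact ⟨congrArg Prod.fst heq', congrArg Prod.snd heq'⟩
    · rcases hw with h | h
      · exact absurd h hd.2
      · exact absurd (h ▸ he) hy₀
  -- every open neighbourhood of the basepoint contains transversal points
  have exists_mk_mem : ∀ N : Set (Smash x₀ y₀), IsOpen N → Smash.pt x₀ y₀ ∈ N →
      ∀ d ∈ D', ∃ e ∈ E, Smash.mk x₀ y₀ (d, e) ∈ N := by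
    intro N hN hptN d _
    have hpre : IsOpen ((Smash.mk x₀ y₀) ⁻¹' N) := hN.preimage hquot.continuous
    have hmem : (d, y₀) ∈ (Smash.mk x₀ y₀) ⁻¹' N := by
      have : Smash.mk x₀ y₀ (d, y₀) = Smash.pt x₀ y₀ :=
        Quot.sound (Or.inr ⟨Or.inr rfl, Or.inl rfl⟩)
      simpa [Set.mem_preimage, this] using hptN
    obtain ⟨u, v, hu, hv, hdu, hy₀v, huv⟩ := isOpen_prod_iff.mp hpre d y₀ hmem
    obtain ⟨e, hev, heE⟩ := mem_closure_iff.mp hy₀cl v hv hy₀v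
    exact ⟨e, heE, huv ⟨hdu, hev⟩⟩
  constructor
  · -- Part 1: no compact neighbourhood of the basepoint
    intro K hK hKcomp
    have hint : IsOpen (interior K) := isOpen_interior
    have hptint : Smash.pt x₀ y₀ ∈ interior K := mem_interior_iff_mem_nhds.mpr hK
    have hex : ∀ d ∈ D', ∃ e, e ∈ E ∧ Smash.mk x₀ y₀ (d, e) ∈ interior K := by
      intro d hd
      obtain ⟨e, he, hmem⟩ := exists_mk_mem (interior K) hint hptint d hd
      exact ⟨e, he, hmem⟩
    set σ : X → Y := fun d => if hd : d ∈ D' then (hex d hd).choose else y₀ with hσdef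
    have hσE : ∀ d ∈ D', σ d ∈ E := by
      intro d hd; rw [hσdef]; simp only [dif_pos hd]; exact (hex d hd).choose_spec.1
    have hσK : ∀ d ∈ D', Smash.mk x₀ y₀ (d, σ d) ∈ K := by
      intro d hd; rw [hσdef]; simp only [dif_pos hd]
      exact interior_subset (hex d hd).choose_spec.2
    set F : X → Smash x₀ y₀ := fun d => Smash.mk x₀ y₀ (d, σ d) with hFdef
    have hFinj : ∀ d ∈ D', ∀ d' ∈ D', F d = F d' → d = d' := by
      intro d hd d' hd' heq
      exact (mk_inj d d' (σ d) (σ d') hd hd' (hσE d hd) (hσE d' hd') heq).1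
    have hSsub : F '' D' ⊆ K := by
      rintro z ⟨d, hd, rfl⟩; exact hσK d hd
    have hSclosed : IsClosed (F '' D') := image_closed σ hσE D' (le_refl _)
    have hScomp : IsCompact (F '' D') := hKcomp.of_isClosed_subset hSclosed hSsub
    -- cover by co-single-point sets
    set U : {d : X // d ∈ D'} → Set (Smash x₀ y₀) :=
      fun i => (F '' (D' \ {(i : X)}))ᶜ with hUdef
    have hUopen : ∀ i, IsOpen (U i) :=
      fun i => (image_closed σ hσE _ (Set.diff_subset)).isOpen_compl
    have hUcover : F '' D' ⊆ ⋃ i, U i := by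
      rintro z ⟨d, hd, rfl⟩
      refine Set.mem_iUnion.mpr ⟨⟨d, hd⟩, ?_⟩
      rw [hUdef]
      simp only [Set.mem_compl_iff, Set.mem_image, not_exists]
      rintro d' ⟨⟨hd'D, hd'ne⟩, heq⟩
      exact hd'ne (hFinj d' hd'D d hd heq)
    obtain ⟨t, ht⟩ := hScomp.elim_finite_subcover U hUopen hUcover
    have hD'fin : D' ⊆ (fun i : {d : X // d ∈ D'} => (i : X)) '' (t : Set _) := by
      intro d hd
      obtain ⟨i, hit, hFdU⟩ := Set.mem_iUnion₂.mp (ht ⟨d, hd, rfl⟩)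
      by_cases hne : d = (i : X)
      · exact ⟨i, hit, hne.symm⟩
      · exfalso
        exact hFdU ⟨d, ⟨hd, hne⟩, rfl⟩
    exact hD'_inf ((t.finite_toSet.image _).subset hD'fin)
  · -- Part 2: not exponentiable when X, Y are Hausdorff
    intro hT2X hT2Y hexp
    -- singletons of off-wedge points are closed in the smash
    have hT1 : ∀ (d : X) (e : Y), d ∈ D' → e ∈ E →
        IsClosed {Smash.mk x₀ y₀ (d, e)} := by
      intro d e hd he
      rw [← hquot.isClosed_preimage]
      have : (Smash.mk x₀ y₀) ⁻¹' {Smash.mk x₀ y₀ (d, e)} = {(d, e)} := by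
        ext ⟨x, y⟩
        simp only [Set.mem_preimage, Set.mem_singleton_iff]
        constructor
        · intro heq
          rcases (smash_mk_eq_iff x₀ y₀ _ _).mp heq with heq' | ⟨-, hw⟩
          · exact heq'
          · rcases hw with h | h
            · exact absurd h hd.2
            · exact absurd (h ▸ he) hy₀
        · rintro h; rw [h]
      rw [this]
      exact isClosed_singleton
    -- the index types
    set A := Smash x₀ y₀ with hAdef
    set a := Smash.pt x₀ y₀ with hadef
    let 𝒩 := {N : Set A // IsOpen N ∧ a ∈ N}
    let ι := {d : X // d ∈ D'}
    haveI hι_inf : Infinite ι := hD'_inf.to_subtype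
    let R := Option ι
    letI t𝒩 : TopologicalSpace 𝒩 := ⊥
    haveI : DiscreteTopology 𝒩 := ⟨rfl⟩
    letI tR : TopologicalSpace R := auxTop ι
    let B := 𝒩 × R
    let relC : B → B → Prop := fun b b' => b = b' ∨ (b.2 = none ∧ b'.2 = none)
    have relC_equiv : Equivalence relC := by
      constructor
      · intro b; exact Or.inl rfl
      · rintro b b' (rfl | ⟨h1, h2⟩); · exact Or.inl rfl
        · exact Or.inr ⟨h2, h1⟩
      · rintro b b' b'' (rfl | ⟨h1, h2⟩) (rfl | ⟨h3, h4⟩)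
        · exact Or.inl rfl
        · exact Or.inr ⟨h3, h4⟩
        · exact Or.inr ⟨h1, h2⟩
        · exact Or.inr ⟨h1, h4⟩
    let C := Quot relC
    let f : B → C := Quot.mk relC
    letI tB : TopologicalSpace B := inferInstance
    letI tC : TopologicalSpace C := tB.coinduced f
    have hf : @IsQuotientMap B C tB tC f := ⟨⟨rfl⟩, Quot.exists_rep⟩
    have hfeq : ∀ b b' : B, f b = f b' → relC b b' :=
      fun b b' h => (relC_equiv.eqvGen_iff).mp (Quot.eqvGen_exact h)
    -- the choice of transversal points in each neighbourhood
    have hchoice : ∀ (N : 𝒩) (i : ι), ∃ e ∈ E, Smash.mk x₀ y₀ ((i : X), e) ∈ N.1 :=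
      fun N i => exists_mk_mem N.1 N.2.1 N.2.2 (i : X) i.2
    let σf : 𝒩 → X → Y := fun N d =>
      if hd : d ∈ D' then (hchoice N ⟨d, hd⟩).choose else y₀
    have hσfE : ∀ N, ∀ d ∈ D', σf N d ∈ E := by
      intro N d hd
      simp only [σf, dif_pos hd]
      exact (hchoice N ⟨d, hd⟩).choose_spec.1
    let hfun : 𝒩 → ι → A := fun N i => Smash.mk x₀ y₀ ((i : X), σf N (i : X))
    have hfun_mem : ∀ N i, hfun N i ∈ N.1 := by
      intro N i
      simp only [hfun, σf, dif_pos i.2]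
      exact (hchoice N ⟨(i : X), i.2⟩).choose_spec.2
    have hfun_inj : ∀ N (i i' : ι), hfun N i = hfun N i' → i = i' := by
      intro N i i' h
      exact Subtype.ext (mk_inj _ _ _ _ i.2 i'.2 (hσfE N _ i.2) (hσfE N _ i'.2) h).1
    have hfun_image_closed : ∀ (N : 𝒩) (s : Set ι), IsClosed (hfun N '' s) := by
      intro N s
      have : hfun N '' s = (fun d => Smash.mk x₀ y₀ (d, σf N d)) '' (Subtype.val '' s) := by
        rw [Set.image_image]
      rw [this]
      exact image_closed (σf N) (hσfE N) _ (by rintro x ⟨i, -, rfl⟩; exact i.2)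
    -- the saturated open set
    let O : Set (B × A) := {q | ∀ i : ι, q.1.2 = some i → q.2 ≠ hfun q.1.1 i}
    have hO_none : ∀ (N : 𝒩) (α : A), (((N, none) : B), α) ∈ O := by
      intro N α i h
      exact absurd h (by simp)
    have hOopen : IsOpen O := by
      rw [isOpen_iff_forall_mem_open]
      rintro ⟨⟨N, r⟩, α⟩ hq
      match r with
      | some i =>
        have hne : α ≠ hfun N i := hq i rfl
        refine ⟨(({N} : Set 𝒩) ×ˢ ({some i} : Set R)) ×ˢ ({hfun N i}ᶜ), ?_, ?_, ?_⟩
        · rintro ⟨⟨N', r'⟩, β⟩ ⟨⟨hN', hr'⟩, hβ⟩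
          simp only [Set.mem_singleton_iff] at hN' hr'
          subst hN'; subst hr'
          intro i' hi'
          obtain rfl : i = i' := Option.some.inj hi'
          exact hβ
        · exact ((isOpen_discrete _).prod (auxTop_isOpen_iff _ |>.mpr (by simp))).prod
            (hT1 _ _ i.2 (hσfE N _ i.2)).isOpen_compl
        · exact ⟨⟨rfl, rfl⟩, hne⟩
      | none =>
        by_cases hα : ∃ i₀ : ι, α = hfun N i₀
        · obtain ⟨i₀, rfl⟩ := hα
          refine ⟨(({N} : Set 𝒩) ×ˢ ({some i₀}ᶜ : Set R)) ×ˢ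
            ((hfun N '' {i | i ≠ i₀})ᶜ), ?_, ?_, ?_⟩
          · rintro ⟨⟨N', r'⟩, β⟩ ⟨⟨hN', hr'⟩, hβ⟩
            simp only [Set.mem_singleton_iff] at hN'
            subst hN'
            intro i' hi'
            subst hi'
            have hne : i' ≠ i₀ := by
              rintro rfl; exact hr' rfl
            intro heq
            exact hβ ⟨i', hne, heq.symm⟩
          · refine (((isOpen_discrete _).prod (auxTop_isOpen_iff _ |>.mpr ?_)).prod
              (hfun_image_closed N _).isOpen_compl)
            intro _
            rw [compl_compl]
            exact Set.finite_singleton _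
          · refine ⟨⟨rfl, by simp⟩, ?_⟩
            rintro ⟨i, hi, heq⟩
            exact hi (hfun_inj N i i₀ heq)
        · push_neg at hα
          refine ⟨(({N} : Set 𝒩) ×ˢ (Set.univ : Set R)) ×ˢ ((hfun N '' Set.univ)ᶜ),
            ?_, ?_, ?_⟩
          · rintro ⟨⟨N', r'⟩, β⟩ ⟨⟨hN', -⟩, hβ⟩
            simp only [Set.mem_singleton_iff] at hN'
            subst hN'
            intro i' hi' heq
            exact hβ ⟨i', trivial, heq.symm⟩
          · exact ((isOpen_discrete _).prod (auxTop_isOpen_iff _ |>.mpr (by simp))).prod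
              (hfun_image_closed N _).isOpen_compl
          · refine ⟨⟨rfl, trivial⟩, ?_⟩
            rintro ⟨i, -, heq⟩
            exact hα i heq.symm
    -- the image set G
    let g : B × A → C × A := fun p => (f p.1, p.2)
    have hg : IsQuotientMap g := hexp B C tB tC f hf
    let G : Set (C × A) := {q | ∃ b : B, f b = q.1 ∧ (b, q.2) ∈ O}
    have hpre : g ⁻¹' G = O := by
      ext ⟨b', α⟩
      simp only [Set.mem_preimage, Set.mem_setOf_eq, G, g]
      constructor
      · rintro ⟨b, hb, hbO⟩
        rcases hfeq b b' hb with rfl | ⟨h1, h2⟩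
        · exact hbO
        · intro i hi
          rw [h2] at hi
          exact absurd hi (by simp)
      · intro h
        exact ⟨b', rfl, h⟩
    have hGopen : IsOpen G := hg.isOpen_preimage.mp (hpre ▸ hOopen)
    -- basepoint of C
    let N₀ : 𝒩 := ⟨Set.univ, isOpen_univ, trivial⟩
    let c₀ : C := f (N₀, none)
    have hc₀G : (c₀, a) ∈ G := ⟨(N₀, none), rfl, hO_none N₀ a⟩
    obtain ⟨U, V, hU, hV, hcU, haV, hUV⟩ := isOpen_prod_iff.mp hGopen c₀ a hc₀G
    let N_V : 𝒩 := ⟨V, hV, haV⟩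
    have hc₀' : f (N_V, none) = c₀ := Quot.sound (Or.inr ⟨rfl, rfl⟩)
    have hPopen : IsOpen (f ⁻¹' U) := by
      rw [← isOpen_coinduced (t := tB) (f := f)] at *
      exact hU
    have hcont : Continuous (fun r : R => ((N_V, r) : B)) :=
      continuous_const.prodMk continuous_id
    have hsopen : IsOpen ((fun r : R => ((N_V, r) : B)) ⁻¹' (f ⁻¹' U)) :=
      hPopen.preimage hcont
    have hnone : none ∈ (fun r : R => ((N_V, r) : B)) ⁻¹' (f ⁻¹' U) := by
      simp only [Set.mem_preimage]
      rw [hc₀']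
      exact hcU
    have hfin : ((fun r : R => ((N_V, r) : B)) ⁻¹' (f ⁻¹' U))ᶜ.Finite :=
      (auxTop_isOpen_iff _).mp hsopen hnone
    have hsome : ∃ i : ι, some i ∈ (fun r : R => ((N_V, r) : B)) ⁻¹' (f ⁻¹' U) := by
      by_contra hno
      push_neg at hno
      have : Set.range (some : ι → R) ⊆ ((fun r : R => ((N_V, r) : B)) ⁻¹' (f ⁻¹' U))ᶜ := by
        rintro r ⟨i, rfl⟩
        exact hno i
      exact (Set.infinite_range_of_injective (Option.some_injective ι)).mono this hfin
    obtain ⟨i, hi⟩ := hsome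
    have hmemUV : (f (N_V, some i), hfun N_V i) ∈ U ×ˢ V := ⟨hi, hfun_mem N_V i⟩
    obtain ⟨b₂, hfb₂, hb₂O⟩ := hUV hmemUV
    rcases hfeq b₂ (N_V, some i) hfb₂ with rfl | ⟨-, h2⟩
    · exact hb₂O i rfl rfl
    · exact absurd h2 (by simp)
end
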